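/- arXiv:2109.13393 — 4 statements merged into one kernel-verified Lean document; each statement's English description precedes it below -/
import Mathlib

section
/- Let (H, X, G, k, μ, d) be a Berezin quantization with x ↦ k_x continuous and k_e ≠ 0. For σ : X → [0,1] measurable, the following are equivalent: (i) the Berezin transform σ̃(y) = ∫_X σ(x)|⟨k_x, k_y⟩|² dμ(x) tends to 0 as d(e, y) → ∞; (ii) ∫_{B(y,R)} σ dμ → 0 as d(e, y) → ∞ for some R > 0; (iii) ∫_{B(y,R)} σ dμ → 0 as d(e, y) → ∞ for all R > 0. -/
open MeasureTheory Filter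

local notation "⟪" x ", " y "⟫" => @inner ℂ _ _ x y

private lemma setIntegral_biUnion_le_sum {X : Type*} [MeasurableSpace X] {μ : Measure X}
    {ι : Type*} (t : Finset ι) (s : ι → Set X) (f : X → ℝ)
    (hf0 : ∀ x, 0 ≤ f x) (hmeas : ∀ i, MeasurableSet (s i))
    (hint : ∀ i, IntegrableOn f (s i) μ) :
    ∫ x in ⋃ i ∈ t, s i, f x ∂μ ≤ ∑ i ∈ t, ∫ x in s i, f x ∂μ := by
  classical
  induction t using Finset.induction_on with
  | empty => simp
  | @insert a t ha ih =>
      rw [Finset.set_biUnion_insert, Finset.sum_insert ha]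
      have hBmeas : MeasurableSet (⋃ i ∈ t, s i) := by
        exact MeasurableSet.biUnion t.countable_toSet fun i _ => hmeas i
      have hBint : IntegrableOn f (⋃ i ∈ t, s i) μ := by
        apply (integrableOn_finite_biUnion t.finite_toSet).mpr
        intro i _; exact hint i
      have hsplit : s a ∪ ⋃ i ∈ t, s i = s a ∪ ((⋃ i ∈ t, s i) \ s a) :=
        (Set.union_diff_self).symm
      have h1 : ∫ x in s a ∪ ⋃ i ∈ t, s i, f x ∂μ
          = ∫ x in s a, f x ∂μ + ∫ x in (⋃ i ∈ t, s i) \ s a, f x ∂μ := by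
        rw [hsplit]
        exact setIntegral_union disjoint_sdiff_self_right (hBmeas.diff (hmeas a))
          (hint a) (hBint.mono_set Set.diff_subset)
      have h2 : ∫ x in (⋃ i ∈ t, s i) \ s a, f x ∂μ ≤ ∫ x in ⋃ i ∈ t, s i, f x ∂μ :=
        setIntegral_mono_set hBint (Eventually.of_forall fun x => hf0 x)
          (Set.diff_subset).eventuallyLE
      linarith [ih]

/-- characterization of thinness.  For a Berezin quantization with a
continuous frame and nonzero frame vectors and `σ : X → [0,1]` measurable, the
following are equivalent:
(i) the Berezin transform of `σ` vanishes at infinity;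
(ii) `∫_{B(y,R)} σ dμ → 0` as `y → ∞` for some `R > 0`;
(iii) `∫_{B(y,R)} σ dμ → 0` as `y → ∞` for all `R > 0`. -/
theorem thinness_tfae
    {H : Type*} [NormedAddCommGroup H] [InnerProductSpace ℂ H] [CompleteSpace H]
    {X : Type*} [MetricSpace X] [ProperSpace X] [MeasurableSpace X] [BorelSpace X]
    (μ : Measure X)
    {G : Type*} [Group G] [MulAction G X]
    (htrans : ∀ x y : X, ∃ g : G, g • x = y)
    (hμinv : ∀ (g : G) (E : Set X), MeasurableSet E → μ ((g • ·) '' E) = μ E)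
    (hdinv : ∀ (g : G) (x y : X), dist (g • x) (g • y) = dist x y)
    (k : X → H) (hk : Continuous k)
    (hframe : ∀ f g : H, ⟪f, g⟫ = ∫ x, ⟪f, k x⟫ * ⟪k x, g⟫ ∂μ)
    (hmod : ∀ (g : G) (x y : X), ‖⟪k (g • x), k (g • y)⟫‖ = ‖⟪k x, k y⟫‖)
    (e : X) (hke : k e ≠ 0)
    (σ : X → ℝ) (hσmeas : Measurable σ) (hσ0 : ∀ x, 0 ≤ σ x) (hσ1 : ∀ x, σ x ≤ 1) :
    List.TFAE
      [ Tendsto (fun y : X => ∫ x, σ x * ‖⟪k x, k y⟫‖ ^ 2 ∂μ)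
          (comap (dist e) atTop) (nhds 0),
        ∃ R > (0 : ℝ), Tendsto (fun y : X => ∫ x in Metric.ball y R, σ x ∂μ)
          (comap (dist e) atTop) (nhds 0),
        ∀ R > (0 : ℝ), Tendsto (fun y : X => ∫ x in Metric.ball y R, σ x ∂μ)
          (comap (dist e) atTop) (nhds 0) ] := by
  classical
  have hc : (0:ℝ) < ‖k e‖ := norm_pos_iff.mpr hke
  set c : ℝ := ‖k e‖ with hcdef
  -- basics about the group action
  have hiso : ∀ g : G, Isometry (fun x : X => g • x) :=
    fun g => Isometry.of_dist_eq fun a b => hdinv g a b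
  have hmg : ∀ g : G, Measurable (fun x : X => g • x) :=
    fun g => (hiso g).continuous.measurable
  have hmap : ∀ g : G, Measure.map (fun x : X => g • x) μ = μ := by
    intro g
    ext E hE
    rw [Measure.map_apply (hmg g) hE]
    have himg : (fun x : X => g • x) ⁻¹' E = (fun x : X => g⁻¹ • x) '' E := by
      ext x
      constructor
      · intro hx; exact ⟨g • x, hx, by simp⟩
      · rintro ⟨z, hz, rfl⟩; simpa using hz
    rw [himg]
    exact hμinv g⁻¹ E hE
  have hpre_ball : ∀ (g : G) (R : ℝ),
      (fun x : X => g • x) ⁻¹' Metric.ball (g • e) R = Metric.ball e R := by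
    intro g R
    ext x
    simp [Metric.mem_ball, hdinv]
  -- continuity/measurability of the kernel
  have hΦc : ∀ y : X, Continuous fun x => ‖⟪k x, k y⟫‖ ^ 2 :=
    fun y => (hk.inner continuous_const).norm.pow 2
  -- the constant norm
  have hnorm : ∀ y : X, ‖k y‖ = c := by
    intro y
    obtain ⟨g, hg⟩ := htrans e y
    subst hg
    have h := hmod g e e
    rw [inner_self_eq_norm_sq_to_K, inner_self_eq_norm_sq_to_K] at h
    rw [hcdef]
    simpa using h
  -- integrability and value of the kernel integral at the base point
  have hGeq : ∀ x, ⟪k e, k x⟫ * ⟪k x, k e⟫ = ((‖⟪k x, k e⟫‖ ^ 2 : ℝ) : ℂ) := by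
    intro x
    rw [← inner_conj_symm (k e) (k x), RCLike.conj_mul]
    norm_cast
  have hGint : Integrable (fun x => ⟪k e, k x⟫ * ⟪k x, k e⟫) μ := by
    by_contra h
    have h0 := integral_undef h
    rw [← hframe (k e) (k e), inner_self_eq_norm_sq_to_K] at h0
    have : (‖k e‖ : ℂ) = 0 := by
      exact pow_eq_zero_iff (n := 2) (by norm_num) |>.mp h0
    simp [hke] at this
  have hFe_int : Integrable (fun x => ‖⟪k x, k e⟫‖ ^ 2) μ := by
    have h2 := hGint.re
    simp_rw [hGeq] at h2
    simpa [← Complex.ofReal_pow] using h2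
  have hFe_val : ∫ x, ‖⟪k x, k e⟫‖ ^ 2 ∂μ = c ^ 2 := by
    have h0 := integral_re hGint
    rw [← hframe (k e) (k e)] at h0
    simp_rw [hGeq, RCLike.re_to_complex, Complex.ofReal_re] at h0
    rw [h0, ← RCLike.re_to_complex, inner_self_eq_norm_sq (𝕜 := ℂ) (k e), hcdef]
  -- transport to an arbitrary point
  have hF_int : ∀ y : X, Integrable (fun x => ‖⟪k x, k y⟫‖ ^ 2) μ := by
    intro y
    obtain ⟨g, hg⟩ := htrans e y
    subst hg
    have h : Integrable (fun x => ‖⟪k x, k (g • e)⟫‖ ^ 2)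
        (Measure.map (fun x : X => g • x) μ) := by
      rw [integrable_map_measure ?_ (hmg g).aemeasurable]
      · simpa only [Function.comp_def, hmod] using hFe_int
      · rw [hmap g]; exact (hΦc _).aestronglyMeasurable
    rwa [hmap g] at h
  have hset_transport : ∀ (g : G) (s : Set X), MeasurableSet s →
      ∫ x in s, ‖⟪k x, k (g • e)⟫‖ ^ 2 ∂μ
        = ∫ x in (fun x : X => g • x) ⁻¹' s, ‖⟪k x, k e⟫‖ ^ 2 ∂μ := by
    intro g s hs
    conv_lhs => rw [← hmap g]
    rw [setIntegral_map hs ?_ (hmg g).aemeasurable]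
    · simp_rw [hmod]
    · rw [hmap g]; exact (hΦc _).aestronglyMeasurable
  -- the uniform tail estimate
  have htail : ∀ ε : ℝ, 0 < ε → ∃ R : ℝ, 0 < R ∧ ∀ y : X,
      ∫ x in (Metric.ball y R)ᶜ, ‖⟪k x, k y⟫‖ ^ 2 ∂μ < ε := by
    intro ε hε
    have hmono : Monotone fun n : ℕ => Metric.ball e (n : ℝ) :=
      fun m n hmn => Metric.ball_subset_ball (by exact_mod_cast hmn)
    have hun : (⋃ n : ℕ, Metric.ball e (n : ℝ)) = Set.univ := by
      ext x
      simp only [Set.mem_iUnion, Metric.mem_ball, Set.mem_univ, iff_true]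
      obtain ⟨n, hn⟩ := exists_nat_gt (dist x e)
      exact ⟨n, hn⟩
    have htend := tendsto_setIntegral_of_monotone
      (fun n : ℕ => measurableSet_ball (x := e) (ε := (n : ℝ))) hmono
      (by rw [hun]; exact hFe_int.integrableOn)
    rw [hun, setIntegral_univ, hFe_val] at htend
    have hev : ∀ᶠ n : ℕ in atTop, c ^ 2 - ε < ∫ x in Metric.ball e (n : ℝ), ‖⟪k x, k e⟫‖ ^ 2 ∂μ :=
      htend.eventually (eventually_gt_nhds (by linarith))
    obtain ⟨n, hn⟩ := (hev.and (eventually_ge_atTop 1)).exists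
    refine ⟨(n : ℝ), by exact_mod_cast hn.2, ?_⟩
    have hcompl_e : ∫ x in (Metric.ball e (n : ℝ))ᶜ, ‖⟪k x, k e⟫‖ ^ 2 ∂μ < ε := by
      have hadd := integral_add_compl (measurableSet_ball (x := e) (ε := (n:ℝ))) hFe_int
      rw [hFe_val] at hadd
      linarith [hn.1]
    intro y
    obtain ⟨g, hg⟩ := htrans e y
    subst hg
    rw [hset_transport g _ (measurableSet_ball.compl)]
    rw [Set.preimage_compl, hpre_ball]
    exact hcompl_e
  -- lower bound on the kernel near the diagonal
  obtain ⟨r, hr0, hrlow⟩ : ∃ r : ℝ, 0 < r ∧ ∀ y x : X, dist x y < r →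
      c ^ 2 / 2 ≤ ‖⟪k x, k y⟫‖ := by
    have hcont : ContinuousAt (fun x => ‖⟪k x, k e⟫‖) e :=
      ((hk.inner continuous_const).norm).continuousAt
    have hval : ‖⟪k e, k e⟫‖ = c ^ 2 := by
      rw [inner_self_eq_norm_sq_to_K]
      simp [Complex.norm_real, abs_norm, hcdef]
    obtain ⟨r, hr0, hball⟩ := Metric.continuousAt_iff.mp hcont (c ^ 2 / 2) (by positivity)
    refine ⟨r, hr0, fun y x hxy => ?_⟩
    obtain ⟨g, hg⟩ := htrans y e
    have h1 : ‖⟪k x, k y⟫‖ = ‖⟪k (g • x), k e⟫‖ := by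
      rw [← hg, hmod]
    have h2 : dist (g • x) e < r := by
      rw [← hg, hdinv]; exact hxy
    have h3 := hball h2
    rw [hval, Real.dist_eq] at h3
    have h4 := abs_lt.mp h3
    rw [h1]
    linarith [h4.1]
  -- balls have finite measure
  have hball_fin_r : ∀ y : X, μ (Metric.ball y r) < ⊤ := by
    intro y
    have hsub : Metric.ball y r ⊆ {x | (c ^ 2 / 2) ^ 2 ≤ ‖⟪k x, k y⟫‖ ^ 2} := by
      intro x hx
      exact pow_le_pow_left₀ (by positivity) (hrlow y x (Metric.mem_ball.mp hx)) 2
    exact lt_of_le_of_lt (measure_mono hsub) ((hF_int y).measure_ge_lt_top (by positivity))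
  have hball_eq : ∀ (y : X) (R : ℝ), μ (Metric.ball y R) = μ (Metric.ball e R) := by
    intro y R
    obtain ⟨g, hg⟩ := htrans e y
    subst hg
    conv_lhs => rw [← hmap g]
    rw [Measure.map_apply (hmg g) measurableSet_ball, hpre_ball]
  have hball_fin : ∀ (y : X) (R : ℝ), μ (Metric.ball y R) < ⊤ := by
    intro y R
    rw [hball_eq]
    obtain ⟨t, ht⟩ := (isCompact_closedBall e R).elim_finite_subcover
      (fun z : X => Metric.ball z r) (fun z => Metric.isOpen_ball)
      (fun x _ => Set.mem_iUnion.mpr ⟨x, Metric.mem_ball_self hr0⟩)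
    calc μ (Metric.ball e R) ≤ μ (⋃ z ∈ t, Metric.ball z r) :=
          measure_mono (Metric.ball_subset_closedBall.trans ht)
      _ ≤ ∑ z ∈ t, μ (Metric.ball z r) := measure_biUnion_finset_le t _
      _ < ⊤ := ENNReal.sum_lt_top.mpr fun z _ => (hball_fin_r z)
  -- σ is integrable on balls
  have hσint : ∀ (y : X) (R : ℝ), IntegrableOn σ (Metric.ball y R) μ := by
    intro y R
    apply Measure.integrableOn_of_bounded (M := 1) (hball_fin y R).ne
      hσmeas.aestronglyMeasurable
    filter_upwards with x
    rw [Real.norm_eq_abs]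
    exact abs_le.mpr ⟨by linarith [hσ0 x], hσ1 x⟩
  -- σ·Φ is integrable
  have hσF_int : ∀ y : X, Integrable (fun x => σ x * ‖⟪k x, k y⟫‖ ^ 2) μ := by
    intro y
    apply (hF_int y).mono' ((hσmeas.mul (hΦc y).measurable).aestronglyMeasurable)
    filter_upwards with x
    rw [Real.norm_eq_abs, Pi.mul_apply, abs_mul, abs_of_nonneg (by positivity : (0:ℝ) ≤ ‖⟪k x, k y⟫‖ ^ 2)]
    calc |σ x| * ‖⟪k x, k y⟫‖ ^ 2 ≤ 1 * ‖⟪k x, k y⟫‖ ^ 2 :=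
          mul_le_mul_of_nonneg_right (abs_le.mpr ⟨by linarith [hσ0 x], hσ1 x⟩) (by positivity)
      _ = ‖⟪k x, k y⟫‖ ^ 2 := one_mul _
  -- reformulation of the filter convergence
  have hfilter : ∀ f : X → ℝ, (∀ y, 0 ≤ f y) →
      (Tendsto f (comap (dist e) atTop) (nhds 0) ↔
        ∀ ε : ℝ, 0 < ε → ∃ M : ℝ, ∀ y : X, M ≤ dist e y → f y < ε) := by
    intro f hf
    rw [Metric.tendsto_nhds]
    constructor
    · intro h ε hε
      have h2 := h ε hε
      rw [eventually_comap, eventually_atTop] at h2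
      obtain ⟨M, hM⟩ := h2
      refine ⟨M, fun y hy => ?_⟩
      have := hM (dist e y) hy y rfl
      rwa [Real.dist_0_eq_abs, abs_of_nonneg (hf y)] at this
    · intro h ε hε
      obtain ⟨M, hM⟩ := h ε hε
      rw [eventually_comap, eventually_atTop]
      refine ⟨M, fun b hb y hy => ?_⟩
      rw [Real.dist_0_eq_abs, abs_of_nonneg (hf y)]
      exact hM y (hy ▸ hb)
  have hσball_nonneg : ∀ (R : ℝ) (y : X), 0 ≤ ∫ x in Metric.ball y R, σ x ∂μ :=
    fun R y => setIntegral_nonneg measurableSet_ball fun x _ => hσ0 x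
  have hσF_nonneg : ∀ y : X, 0 ≤ ∫ x, σ x * ‖⟪k x, k y⟫‖ ^ 2 ∂μ :=
    fun y => integral_nonneg fun x => mul_nonneg (hσ0 x) (by positivity)
  -- (i) → (ii)
  tfae_have 1 → 2 := by
    intro h1
    refine ⟨r, hr0, ?_⟩
    rw [hfilter _ (hσball_nonneg r)]
    intro ε hε
    rw [hfilter _ hσF_nonneg] at h1
    have hc4 : (0:ℝ) < (c ^ 2 / 2) ^ 2 := by positivity
    obtain ⟨M, hM⟩ := h1 (ε * (c ^ 2 / 2) ^ 2) (by positivity)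
    refine ⟨M, fun y hy => ?_⟩
    have step1 : (c ^ 2 / 2) ^ 2 * ∫ x in Metric.ball y r, σ x ∂μ
        = ∫ x in Metric.ball y r, (c ^ 2 / 2) ^ 2 * σ x ∂μ :=
      (integral_const_mul _ _).symm
    have step2 : ∫ x in Metric.ball y r, (c ^ 2 / 2) ^ 2 * σ x ∂μ
        ≤ ∫ x in Metric.ball y r, σ x * ‖⟪k x, k y⟫‖ ^ 2 ∂μ := by
      apply setIntegral_mono_on ((hσint y r).const_mul _) ((hσF_int y).integrableOn)
        measurableSet_ball
      intro x hx
      have hlow2 : (c ^ 2 / 2) ^ 2 ≤ ‖⟪k x, k y⟫‖ ^ 2 :=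
        pow_le_pow_left₀ (by positivity) (hrlow y x (Metric.mem_ball.mp hx)) 2
      calc (c ^ 2 / 2) ^ 2 * σ x = σ x * (c ^ 2 / 2) ^ 2 := mul_comm _ _
        _ ≤ σ x * ‖⟪k x, k y⟫‖ ^ 2 := mul_le_mul_of_nonneg_left hlow2 (hσ0 x)
    have step3 : ∫ x in Metric.ball y r, σ x * ‖⟪k x, k y⟫‖ ^ 2 ∂μ
        ≤ ∫ x, σ x * ‖⟪k x, k y⟫‖ ^ 2 ∂μ :=
      setIntegral_le_integral (hσF_int y)
        (Eventually.of_forall fun x => mul_nonneg (hσ0 x) (by positivity))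
    have hkey : (c ^ 2 / 2) ^ 2 * ∫ x in Metric.ball y r, σ x ∂μ
        < ε * (c ^ 2 / 2) ^ 2 := by
      have := hM y hy
      linarith
    nlinarith [hσball_nonneg r y]
  -- (ii) → (iii)
  tfae_have 2 → 3 := by
    rintro ⟨R₀, hR₀, h2⟩ R hR
    rw [hfilter _ (hσball_nonneg R)]
    intro ε hε
    rw [hfilter _ (hσball_nonneg R₀)] at h2
    obtain ⟨t, ht⟩ := (isCompact_closedBall e R).elim_finite_subcover
      (fun z : Metric.closedBall e R => Metric.ball (z : X) R₀)
      (fun z => Metric.isOpen_ball)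
      (fun x hx => Set.mem_iUnion.mpr ⟨⟨x, hx⟩, Metric.mem_ball_self hR₀⟩)
    obtain ⟨M, hM⟩ := h2 (ε / (t.card + 1)) (div_pos hε (Nat.cast_add_one_pos _))
    refine ⟨M + R, fun y hy => ?_⟩
    obtain ⟨g, hg⟩ := htrans e y
    have hdist : ∀ z : Metric.closedBall e R, z ∈ t → M ≤ dist e (g • (z : X)) := by
      intro z hz
      have h1 : dist (g • (z : X)) y = dist (z : X) e := by
        conv_lhs => rw [← hg]
        rw [hdinv]
      have h2' : dist (z : X) e ≤ R := Metric.mem_closedBall.mp z.2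
      have h3 : dist e y ≤ dist e (g • (z : X)) + dist (g • (z : X)) y := dist_triangle _ _ _
      rw [h1] at h3
      linarith
    have hcover : Metric.ball y R ⊆ ⋃ z ∈ t, Metric.ball (g • (z : X)) R₀ := by
      intro x hx
      have hx' : g⁻¹ • x ∈ Metric.closedBall e R := by
        rw [Metric.mem_closedBall]
        have heq : dist (g⁻¹ • x) e = dist x y := by
          conv_rhs => rw [← hg]
          rw [← hdinv g (g⁻¹ • x) e]
          simp
        rw [heq]
        exact le_of_lt (Metric.mem_ball.mp hx)
      have := ht hx'
      rw [Set.mem_iUnion₂] at this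
      obtain ⟨z, hz, hmem⟩ := this
      rw [Set.mem_iUnion₂]
      refine ⟨z, hz, ?_⟩
      rw [Metric.mem_ball] at hmem ⊢
      have : dist x (g • (z : X)) = dist (g⁻¹ • x) (z : X) := by
        rw [← hdinv g (g⁻¹ • x) (z : X)]
        simp
      rwa [this]
    have hsub2 : (⋃ z ∈ t, Metric.ball (g • (z : X)) R₀) ⊆ Metric.ball y (R + R₀) := by
      intro x hx
      rw [Set.mem_iUnion₂] at hx
      obtain ⟨z, hz, hmem⟩ := hx
      rw [Metric.mem_ball] at hmem ⊢
      have h1 : dist (g • (z : X)) y = dist (z : X) e := by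
        conv_lhs => rw [← hg]
        rw [hdinv]
      have h2' : dist (z : X) e ≤ R := Metric.mem_closedBall.mp z.2
      calc dist x y ≤ dist x (g • (z : X)) + dist (g • (z : X)) y := dist_triangle _ _ _
        _ < R₀ + R := by rw [h1]; linarith
        _ = R + R₀ := by ring
    have hintU : IntegrableOn σ (⋃ z ∈ t, Metric.ball (g • (z : X)) R₀) μ :=
      (hσint y (R + R₀)).mono_set hsub2
    have hb1 : ∫ x in Metric.ball y R, σ x ∂μ
        ≤ ∫ x in ⋃ z ∈ t, Metric.ball (g • (z : X)) R₀, σ x ∂μ :=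
      setIntegral_mono_set hintU (Eventually.of_forall fun x => hσ0 x) hcover.eventuallyLE
    have hb2 : ∫ x in ⋃ z ∈ t, Metric.ball (g • (z : X)) R₀, σ x ∂μ
        ≤ ∑ z ∈ t, ∫ x in Metric.ball (g • (z : X)) R₀, σ x ∂μ :=
      setIntegral_biUnion_le_sum t _ σ hσ0 (fun _ => measurableSet_ball)
        (fun z => hσint _ R₀)
    have hb3 : ∑ z ∈ t, ∫ x in Metric.ball (g • (z : X)) R₀, σ x ∂μ
        ≤ (t.card : ℝ) * (ε / (t.card + 1)) := by
      rw [← nsmul_eq_mul]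
      apply Finset.sum_le_card_nsmul
      intro z hz
      exact le_of_lt (hM _ (hdist z hz))
    have hb4 : (t.card : ℝ) * (ε / (t.card + 1)) < ε := by
      have hq : (0:ℝ) < ε / (t.card + 1) := div_pos hε (Nat.cast_add_one_pos _)
      have hqe : ((t.card : ℝ) + 1) * (ε / (t.card + 1)) = ε := by
        exact mul_div_cancel₀ ε (ne_of_gt (Nat.cast_add_one_pos _))
      nlinarith
    linarith
  -- (iii) → (i)
  tfae_have 3 → 1 := by
    intro h3
    rw [hfilter _ hσF_nonneg]
    intro ε hε
    obtain ⟨R, hRpos, hR⟩ := htail (ε / 2) (by positivity)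
    have h3R := h3 R hRpos
    rw [hfilter _ (hσball_nonneg R)] at h3R
    obtain ⟨M, hM⟩ := h3R (ε / (2 * (c ^ 4 + 1))) (by positivity)
    refine ⟨M, fun y hy => ?_⟩
    have hsplit := integral_add_compl (measurableSet_ball (x := y) (ε := R)) (hσF_int y)
    have hb1 : ∫ x in Metric.ball y R, σ x * ‖⟪k x, k y⟫‖ ^ 2 ∂μ
        ≤ c ^ 4 * ∫ x in Metric.ball y R, σ x ∂μ := by
      rw [← integral_const_mul]
      apply setIntegral_mono_on ((hσF_int y).integrableOn) ((hσint y R).const_mul _)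
        measurableSet_ball
      intro x _
      have hCS : ‖⟪k x, k y⟫‖ ≤ c * c := by
        have h := norm_inner_le_norm (𝕜 := ℂ) (k x) (k y)
        rwa [hnorm x, hnorm y] at h
      have hF4 : ‖⟪k x, k y⟫‖ ^ 2 ≤ c ^ 4 := by
        have := pow_le_pow_left₀ (norm_nonneg _) hCS 2
        calc ‖⟪k x, k y⟫‖ ^ 2 ≤ (c * c) ^ 2 := this
          _ = c ^ 4 := by ring
      calc σ x * ‖⟪k x, k y⟫‖ ^ 2 ≤ σ x * c ^ 4 :=
            mul_le_mul_of_nonneg_left hF4 (hσ0 x)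
        _ = c ^ 4 * σ x := mul_comm _ _
    have hb2 : ∫ x in (Metric.ball y R)ᶜ, σ x * ‖⟪k x, k y⟫‖ ^ 2 ∂μ
        ≤ ∫ x in (Metric.ball y R)ᶜ, ‖⟪k x, k y⟫‖ ^ 2 ∂μ := by
      apply setIntegral_mono_on ((hσF_int y).integrableOn) ((hF_int y).integrableOn)
        measurableSet_ball.compl
      intro x _
      calc σ x * ‖⟪k x, k y⟫‖ ^ 2 ≤ 1 * ‖⟪k x, k y⟫‖ ^ 2 :=
            mul_le_mul_of_nonneg_right (hσ1 x) (by positivity)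
        _ = ‖⟪k x, k y⟫‖ ^ 2 := one_mul _
    have htaily := hR y
    have hMy := hM y hy
    have hc4 : (0:ℝ) ≤ c ^ 4 := by positivity
    have hq : (0:ℝ) < ε / (2 * (c ^ 4 + 1)) := by positivity
    have hqe : (2 * (c ^ 4 + 1)) * (ε / (2 * (c ^ 4 + 1))) = ε := by field_simp
    nlinarith [hσball_nonneg R y]
  tfae_finish
end

section
/- Let {k_x}_{x∈X} be a continuous Parseval frame for H over a measure space (X, μ). If σ : X → [0, ∞) is bounded and in L¹(X, μ), then the Toeplitz operator T_σ f = ∫_X σ(x)⟨f, k_x⟩ k_x dμ(x) is compact. -/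
open MeasureTheory

local notation "⟪" x ", " y "⟫" => @inner ℂ _ _ x y

/-- Every sequence in the closed unit ball of a Hilbert space has a weakly
convergent-along-inner-products subsequence. -/
lemma exists_weak_cauchy_subseq {H : Type*} [NormedAddCommGroup H] [InnerProductSpace ℂ H]
    [CompleteSpace H] (f : ℕ → H) (hf : ∀ n, ‖f n‖ ≤ 1) :
    ∃ φ : ℕ → ℕ, StrictMono φ ∧
      ∀ v : H, ∃ c : ℂ, Filter.Tendsto (fun j => ⟪f (φ j), v⟫) Filter.atTop (nhds c) := by
  -- diagonal-free subsequence extraction via compactness of a countable product of balls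
  set u : ℕ → (ℕ → ℂ) := fun n m => ⟪f n, f m⟫ with hu
  have hKcompact : IsCompact (Set.univ.pi fun _ : ℕ => Metric.closedBall (0:ℂ) 1) :=
    isCompact_univ_pi fun _ => isCompact_closedBall _ _
  have humem : ∀ n, u n ∈ Set.univ.pi fun _ : ℕ => Metric.closedBall (0:ℂ) 1 := by
    intro n m _
    simp only [Metric.mem_closedBall, dist_zero_right]
    calc ‖⟪f n, f m⟫‖ ≤ ‖f n‖ * ‖f m‖ := norm_inner_le_norm _ _
      _ ≤ 1 * 1 := mul_le_mul (hf n) (hf m) (norm_nonneg _) zero_le_one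
      _ = 1 := by ring
  obtain ⟨L, -, φ, hφ, hLtendsto⟩ := hKcompact.tendsto_subseq humem
  refine ⟨φ, hφ, ?_⟩
  set g : ℕ → H := fun j => f (φ j) with hg
  have hgnorm : ∀ j, ‖g j‖ ≤ 1 := fun j => hf (φ j)
  have hpt : ∀ m, Filter.Tendsto (fun j => ⟪g j, f m⟫) Filter.atTop (nhds (L m)) := by
    intro m
    have := (continuous_apply m).continuousAt.tendsto.comp hLtendsto
    exact this
  -- convergence on the span of the range of f
  set K : Submodule ℂ H := Submodule.span ℂ (Set.range f) with hK
  have hspan : ∀ w ∈ K, ∃ c : ℂ, Filter.Tendsto (fun j => ⟪g j, w⟫) Filter.atTop (nhds c) := by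
    intro w hw
    induction hw using Submodule.span_induction with
    | mem x h =>
      obtain ⟨m, rfl⟩ := h
      exact ⟨L m, hpt m⟩
    | zero => exact ⟨0, by simp [inner_zero_right]⟩
    | add x y hx hy ihx ihy =>
      obtain ⟨cx, hcx⟩ := ihx
      obtain ⟨cy, hcy⟩ := ihy
      exact ⟨cx + cy, by simpa [inner_add_right] using hcx.add hcy⟩
    | smul a x hx ihx =>
      obtain ⟨cx, hcx⟩ := ihx
      exact ⟨a * cx, by simpa [inner_smul_right] using hcx.const_mul a⟩
  -- convergence on the closure of the span
  have hclos : ∀ y ∈ closure (K : Set H),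
      ∃ c : ℂ, Filter.Tendsto (fun j => ⟪g j, y⟫) Filter.atTop (nhds c) := by
    intro y hy
    have hcauchy : CauchySeq (fun j => ⟪g j, y⟫) := by
      rw [Metric.cauchySeq_iff]
      intro ε hε
      obtain ⟨w, hwK, hwy⟩ : ∃ w ∈ (K : Set H), dist y w < ε / 4 :=
        Metric.mem_closure_iff.mp hy (ε / 4) (by linarith)
      obtain ⟨c, hc⟩ := hspan w hwK
      have hcs : CauchySeq (fun j => ⟪g j, w⟫) := hc.cauchySeq
      rw [Metric.cauchySeq_iff] at hcs
      obtain ⟨N, hN⟩ := hcs (ε / 4) (by linarith)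
      refine ⟨N, fun m hm n hn => ?_⟩
      have key : ∀ i, ‖⟪g i, y⟫ - ⟪g i, w⟫‖ ≤ ε / 4 := by
        intro i
        rw [← inner_sub_right]
        calc ‖⟪g i, y - w⟫‖ ≤ ‖g i‖ * ‖y - w‖ := norm_inner_le_norm _ _
          _ ≤ 1 * ‖y - w‖ := by
              exact mul_le_mul_of_nonneg_right (hgnorm i) (norm_nonneg _)
          _ = dist y w := by rw [one_mul, dist_eq_norm]
          _ ≤ ε / 4 := le_of_lt hwy
      have h1 := key m
      have h2 := key n
      have h3 := hN m hm n hn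
      rw [dist_eq_norm] at h3 ⊢
      calc ‖⟪g m, y⟫ - ⟪g n, y⟫‖
          = ‖(⟪g m, y⟫ - ⟪g m, w⟫) + (⟪g m, w⟫ - ⟪g n, w⟫) + (⟪g n, w⟫ - ⟪g n, y⟫)‖ := by
            ring_nf
        _ ≤ ‖(⟪g m, y⟫ - ⟪g m, w⟫) + (⟪g m, w⟫ - ⟪g n, w⟫)‖ + ‖⟪g n, w⟫ - ⟪g n, y⟫‖ :=
            norm_add_le _ _
        _ ≤ ‖⟪g m, y⟫ - ⟪g m, w⟫‖ + ‖⟪g m, w⟫ - ⟪g n, w⟫‖ + ‖⟪g n, w⟫ - ⟪g n, y⟫‖ := by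
            have := norm_add_le (⟪g m, y⟫ - ⟪g m, w⟫) (⟪g m, w⟫ - ⟪g n, w⟫)
            linarith
        _ < ε := by
            have h2' : ‖⟪g n, w⟫ - ⟪g n, y⟫‖ ≤ ε / 4 := by
              rw [norm_sub_rev]; exact h2
            linarith
    exact cauchySeq_tendsto_of_complete hcauchy
  -- general v : decompose into closure-of-span part and orthogonal part
  intro v
  set K' : Submodule ℂ H := K.topologicalClosure with hK'
  haveI : CompleteSpace K' := Submodule.topologicalClosure.completeSpace K
  obtain ⟨y, hyK', z, hz, rfl⟩ := K'.exists_add_mem_mem_orthogonal v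
  have hyc : y ∈ closure (K : Set H) := by
    rwa [← Submodule.topologicalClosure_coe, SetLike.mem_coe]
  obtain ⟨c, hc⟩ := hclos y hyc
  refine ⟨c, ?_⟩
  have hzero : ∀ j, ⟪g j, z⟫ = 0 := by
    intro j
    have hgK' : g j ∈ K' := K.le_topologicalClosure (Submodule.subset_span ⟨φ j, rfl⟩)
    exact (Submodule.mem_orthogonal K' z).mp hz (g j) hgK'
  have : (fun j => ⟪g j, y + z⟫) = fun j => ⟪g j, y⟫ := by
    funext j
    rw [inner_add_right, hzero j, add_zero]
  rw [this]
  exact hc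

/-- for a continuous Parseval frame with uniformly bounded vectors,
the Toeplitz operator with a bounded, nonnegative, integrable symbol is compact. -/
theorem toeplitz_integrable_symbol_compact
    {H : Type*} [NormedAddCommGroup H] [InnerProductSpace ℂ H] [CompleteSpace H]
    {X : Type*} [MeasurableSpace X] (μ : Measure X) (k : X → H)
    (hframe : ∀ f g : H, ⟪f, g⟫ = ∫ x, ⟪f, k x⟫ * ⟪k x, g⟫ ∂μ)
    (hmeas : ∀ f : H, Measurable fun x => ⟪f, k x⟫)
    (C : ℝ) (hbd : ∀ x, ‖k x‖ ≤ C)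
    (σ : X → ℝ) (hσ0 : ∀ x, 0 ≤ σ x) (B : ℝ) (hσbd : ∀ x, σ x ≤ B)
    (hσint : Integrable σ μ)
    (T : H →L[ℂ] H)
    (hT : ∀ f g : H, ⟪T f, g⟫ = ∫ x, (σ x : ℂ) * ⟪f, k x⟫ * ⟪k x, g⟫ ∂μ) :
    IsCompactOperator T := by
  -- Main analytic step: T maps weakly convergent (sub)sequences to norm convergent ones.
  have main : ∀ f : ℕ → H, (∀ n, ‖f n‖ ≤ 1) → ∃ φ : ℕ → ℕ, StrictMono φ ∧
      ∃ y : H, Filter.Tendsto (fun j => T (f (φ j))) Filter.atTop (nhds y) := by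
    intro f hf
    obtain ⟨φ, hφ, hweak⟩ := exists_weak_cauchy_subseq f hf
    set g : ℕ → H := fun j => f (φ j) with hg
    have hgnorm : ∀ j, ‖g j‖ ≤ 1 := fun j => hf (φ j)
    -- the double-indexed integrand
    set F : ℕ × ℕ → X → ℂ := fun p x =>
      (σ x : ℂ) * ⟪g p.1 - g p.2, k x⟫ * ⟪k x, T (g p.1 - g p.2)⟫ with hF
    have hdnorm : ∀ p : ℕ × ℕ, ‖g p.1 - g p.2‖ ≤ 2 := by
      intro p
      calc ‖g p.1 - g p.2‖ ≤ ‖g p.1‖ + ‖g p.2‖ := norm_sub_le _ _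
        _ ≤ 1 + 1 := add_le_add (hgnorm _) (hgnorm _)
        _ = 2 := by norm_num
    have hTd : ∀ p : ℕ × ℕ, ‖T (g p.1 - g p.2)‖ ≤ ‖T‖ * 2 := by
      intro p
      calc ‖T (g p.1 - g p.2)‖ ≤ ‖T‖ * ‖g p.1 - g p.2‖ := T.le_opNorm _
        _ ≤ ‖T‖ * 2 := mul_le_mul_of_nonneg_left (hdnorm p) (norm_nonneg T)
    -- measurability of the integrand
    have hσm : AEStronglyMeasurable (fun x => (σ x : ℂ)) μ :=
      Complex.continuous_ofReal.comp_aestronglyMeasurable hσint.aestronglyMeasurable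
    have hFm : ∀ p : ℕ × ℕ, AEStronglyMeasurable (F p) μ := by
      intro p
      have h1 : Measurable (fun x => ⟪g p.1 - g p.2, k x⟫) := hmeas _
      have h2 : Measurable (fun x => ⟪k x, T (g p.1 - g p.2)⟫) := by
        have : (fun x => ⟪k x, T (g p.1 - g p.2)⟫)
            = fun x => (starRingEnd ℂ) ⟪T (g p.1 - g p.2), k x⟫ := by
          funext x
          rw [inner_conj_symm]
        rw [this]
        exact RCLike.continuous_conj.measurable.comp (hmeas (T (g p.1 - g p.2)))
      exact (hσm.mul h1.aestronglyMeasurable).mul h2.aestronglyMeasurable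
    -- uniform integrable bound
    set bound : X → ℝ := fun x => σ x * ((2 * C) * (C * (‖T‖ * 2))) with hbound
    have hboundint : Integrable bound μ := hσint.mul_const _
    have hFbound : ∀ p : ℕ × ℕ, ∀ᵐ x ∂μ, ‖F p x‖ ≤ bound x := by
      intro p
      filter_upwards with x
      have hC0 : (0:ℝ) ≤ C := le_trans (norm_nonneg (k x)) (hbd x)
      have e1 : ‖⟪g p.1 - g p.2, k x⟫‖ ≤ 2 * C := by
        calc ‖⟪g p.1 - g p.2, k x⟫‖ ≤ ‖g p.1 - g p.2‖ * ‖k x‖ := norm_inner_le_norm _ _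
          _ ≤ 2 * C := mul_le_mul (hdnorm p) (hbd x) (norm_nonneg _) (by norm_num)
      have e2 : ‖⟪k x, T (g p.1 - g p.2)⟫‖ ≤ C * (‖T‖ * 2) := by
        calc ‖⟪k x, T (g p.1 - g p.2)⟫‖ ≤ ‖k x‖ * ‖T (g p.1 - g p.2)‖ := norm_inner_le_norm _ _
          _ ≤ C * (‖T‖ * 2) := mul_le_mul (hbd x) (hTd p) (norm_nonneg _) hC0
      calc ‖F p x‖ = ‖(σ x : ℂ)‖ * ‖⟪g p.1 - g p.2, k x⟫‖ * ‖⟪k x, T (g p.1 - g p.2)⟫‖ := by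
            rw [hF]; simp [norm_mul]
        _ = σ x * (‖⟪g p.1 - g p.2, k x⟫‖ * ‖⟪k x, T (g p.1 - g p.2)⟫‖) := by
            rw [Complex.norm_real, Real.norm_of_nonneg (hσ0 x), mul_assoc]
        _ ≤ σ x * ((2 * C) * (C * (‖T‖ * 2))) := by
            refine mul_le_mul_of_nonneg_left ?_ (hσ0 x)
            exact mul_le_mul e1 e2 (norm_nonneg _) (by positivity)
    -- pointwise convergence to 0 along the product filter
    have hFlim : ∀ᵐ x ∂μ, Filter.Tendsto (fun p : ℕ × ℕ => F p x) Filter.atTop (nhds 0) := by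
      filter_upwards with x
      obtain ⟨c, hc⟩ := hweak (k x)
      have hC0 : (0:ℝ) ≤ C := le_trans (norm_nonneg (k x)) (hbd x)
      have hdiff : Filter.Tendsto (fun p : ℕ × ℕ => ⟪g p.1 - g p.2, k x⟫)
          Filter.atTop (nhds 0) := by
        have h1 : Filter.Tendsto (fun p : ℕ × ℕ => ⟪g p.1, k x⟫) Filter.atTop (nhds c) := by
          rw [← Filter.prod_atTop_atTop_eq]
          exact hc.comp Filter.tendsto_fst
        have h2 : Filter.Tendsto (fun p : ℕ × ℕ => ⟪g p.2, k x⟫) Filter.atTop (nhds c) := by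
          rw [← Filter.prod_atTop_atTop_eq]
          exact hc.comp Filter.tendsto_snd
        have := h1.sub h2
        rw [sub_self] at this
        convert this using 1
        funext p
        rw [inner_sub_left]
      rw [tendsto_zero_iff_norm_tendsto_zero]
      have hbnd : ∀ p : ℕ × ℕ, ‖F p x‖ ≤
          (B * (C * (‖T‖ * 2))) * ‖⟪g p.1 - g p.2, k x⟫‖ := by
        intro p
        have e2 : ‖⟪k x, T (g p.1 - g p.2)⟫‖ ≤ C * (‖T‖ * 2) := by
          calc ‖⟪k x, T (g p.1 - g p.2)⟫‖ ≤ ‖k x‖ * ‖T (g p.1 - g p.2)‖ :=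
              norm_inner_le_norm _ _
            _ ≤ C * (‖T‖ * 2) := mul_le_mul (hbd x) (hTd p) (norm_nonneg _) hC0
        have hσB : ‖(σ x : ℂ)‖ ≤ B := by
          rw [Complex.norm_real, Real.norm_of_nonneg (hσ0 x)]; exact hσbd x
        calc ‖F p x‖ = ‖(σ x : ℂ)‖ * ‖⟪g p.1 - g p.2, k x⟫‖ * ‖⟪k x, T (g p.1 - g p.2)⟫‖ := by
              rw [hF]; simp [norm_mul]
          _ = (‖(σ x : ℂ)‖ * ‖⟪k x, T (g p.1 - g p.2)⟫‖) * ‖⟪g p.1 - g p.2, k x⟫‖ := by ring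
          _ ≤ (B * (C * (‖T‖ * 2))) * ‖⟪g p.1 - g p.2, k x⟫‖ := by
              refine mul_le_mul_of_nonneg_right ?_ (norm_nonneg _)
              exact mul_le_mul hσB e2 (norm_nonneg _)
                (le_trans (norm_nonneg _) hσB)
      refine squeeze_zero (fun p => norm_nonneg _) hbnd ?_
      have := (tendsto_zero_iff_norm_tendsto_zero.mp hdiff).const_mul (B * (C * (‖T‖ * 2)))
      simpa using this
    -- dominated convergence
    have hDCT : Filter.Tendsto (fun p : ℕ × ℕ => ∫ x, F p x ∂μ) Filter.atTop (nhds 0) := by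
      have := MeasureTheory.tendsto_integral_filter_of_dominated_convergence
        (μ := μ) (F := F) (f := fun _ => (0:ℂ)) (l := Filter.atTop)
        bound (Filter.Eventually.of_forall hFm) (Filter.Eventually.of_forall hFbound)
        hboundint hFlim
      simpa using this
    -- translate to norms of differences of T applied to the sequence
    have hnormsq : ∀ p : ℕ × ℕ, ‖T (g p.1) - T (g p.2)‖ ^ 2 = ‖∫ x, F p x ∂μ‖ := by
      intro p
      have h1 : ∫ x, F p x ∂μ = ⟪T (g p.1 - g p.2), T (g p.1 - g p.2)⟫ := (hT _ _).symm
      rw [h1, inner_self_eq_norm_sq_to_K, ← map_sub]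
      rw [norm_pow, RCLike.norm_ofReal, abs_norm]
    have hcauchy : CauchySeq (fun n => T (g n)) := by
      rw [cauchySeq_iff_tendsto_dist_atTop_0]
      have hsq : Filter.Tendsto (fun p : ℕ × ℕ => ‖T (g p.1) - T (g p.2)‖ ^ 2)
          Filter.atTop (nhds 0) := by
        have : (fun p : ℕ × ℕ => ‖T (g p.1) - T (g p.2)‖ ^ 2)
            = fun p => ‖∫ x, F p x ∂μ‖ := by
          funext p; exact hnormsq p
        rw [this]
        exact (tendsto_zero_iff_norm_tendsto_zero.mp hDCT)
      have := (Real.continuous_sqrt.tendsto 0).comp hsq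
      rw [Real.sqrt_zero] at this
      convert this using 1
      funext p
      simp only [Function.comp_apply, dist_eq_norm]
      rw [Real.sqrt_sq (norm_nonneg _)]
    obtain ⟨y, hy⟩ := cauchySeq_tendsto_of_complete hcauchy
    exact ⟨φ, hφ, y, hy⟩
  -- assemble compactness from sequential compactness of the closure of the image of the ball
  rw [show (⇑T : H → H) = ⇑(T : H →ₗ[ℂ] H) from rfl] at *
  rw [isCompactOperator_iff_isCompact_closure_image_closedBall (T : H →ₗ[ℂ] H) zero_lt_one]
  refine IsSeqCompact.isCompact ?_
  intro y hy
  -- approximate each point of the closure by a point of the image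
  have happrox : ∀ n : ℕ, ∃ a : H, ‖a‖ ≤ 1 ∧
      dist (y n) (T a) < 1 / (n + 1) := by
    intro n
    obtain ⟨z, hz, hdz⟩ := Metric.mem_closure_iff.mp (hy n) (1 / (n + 1)) (by positivity)
    obtain ⟨a, ha, rfl⟩ := hz
    rw [Metric.mem_closedBall, dist_zero_right] at ha
    exact ⟨a, ha, hdz⟩
  choose a ha hda using happrox
  obtain ⟨φ, hφ, w, hw⟩ := main a ha
  refine ⟨w, ?_, φ, hφ, ?_⟩
  · refine mem_closure_of_tendsto hw (Filter.Eventually.of_forall fun j => ?_)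
    exact Set.mem_image_of_mem _ (Metric.mem_closedBall.mpr (by simpa using ha (φ j)))
  · have hd : Filter.Tendsto (fun j => dist (y (φ j)) (T (a (φ j)))) Filter.atTop (nhds 0) := by
      refine squeeze_zero (fun j => dist_nonneg) (fun j => le_of_lt (hda (φ j))) ?_
      have h1 : Filter.Tendsto (fun j : ℕ => 1 / ((φ j : ℝ) + 1)) Filter.atTop (nhds 0) := by
        exact tendsto_one_div_add_atTop_nhds_zero_nat.comp hφ.tendsto_atTop
      exact h1
    rw [tendsto_iff_dist_tendsto_zero]
    have hw0 : Filter.Tendsto (fun j => dist (T (a (φ j))) w) Filter.atTop (nhds 0) :=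
      tendsto_iff_dist_tendsto_zero.mp hw
    have hsum := hd.add hw0
    rw [add_zero] at hsum
    refine squeeze_zero (fun j => dist_nonneg) (fun j => ?_) hsum
    exact dist_triangle (y (φ j)) (T (a (φ j))) w
end

section
/- Let 0 < ε < α ≤ 1. Suppose φ ∈ L¹(ℝ^d) ∩ L²(ℝ^d) satisfies: (a) ∫ φ = 0; (b) ∫ |φ(x)| |x|^α dx < ∞; (c) ‖τ_h φ − φ‖_{L¹} ≤ C|h|^α for all h (where τ_h φ(x) = φ(x + h)). Then the wavelet self-reproducing kernel W_φφ(a,b) = ⟨φ, φ_{a,b}⟩ with φ_{a,b}(x) = a^{-d/2}φ(a^{-1}x − b) satisfies ∫_0^∞ ∫_{ℝ^d} |W_φφ(a,b)| a^{d/2+ε} db (da/a) < ∞. -/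
open MeasureTheory ComplexConjugate Real
open scoped ENNReal

section WaveletAux

variable {d : ℕ}

private lemma wka_lintegral_comp_neg (f : EuclideanSpace ℝ (Fin d) → ℝ≥0∞) :
    ∫⁻ x, f (-x) = ∫⁻ x, f x :=
  (Measure.measurePreserving_neg (volume : Measure (EuclideanSpace ℝ (Fin d)))).lintegral_comp_emb
    (MeasurableEquiv.neg (EuclideanSpace ℝ (Fin d))).measurableEmbedding f

private lemma wka_lintegral_comp_const_sub (f : EuclideanSpace ℝ (Fin d) → ℝ≥0∞)
    (v : EuclideanSpace ℝ (Fin d)) :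
    ∫⁻ b, f (v - b) = ∫⁻ b, f b := by
  have h := wka_lintegral_comp_neg (fun b => f (v - b))
  simp only [sub_neg_eq_add] at h
  rw [← h, lintegral_add_left_eq_self f v]

end WaveletAux

/-- if `0 < ε < α ≤ 1` and `φ ∈ L¹ ∩ L²(ℝ^d)` has mean zero, finite
`α`-moment, and L¹-Hölder modulus of continuity of order `α`, then the wavelet
self-reproducing kernel `W_φφ(a,b) = ⟨φ, φ_{a,b}⟩` is integrable against the
weight `a^{d/2+ε}` with respect to `db da/a`. -/
theorem wavelet_kernel_weighted_integrable
    {d : ℕ} (ε α : ℝ) (hε : 0 < ε) (hεα : ε < α) (hα : α ≤ 1)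
    (φ : EuclideanSpace ℝ (Fin d) → ℂ)
    (hφ1 : Integrable φ (volume)) (hφ2 : MemLp φ 2 (volume))
    (hmean : ∫ x, φ x = 0)
    (hmoment : Integrable (fun x : EuclideanSpace ℝ (Fin d) => ‖φ x‖ * ‖x‖ ^ α) volume)
    (C : ℝ)
    (hholder : ∀ h : EuclideanSpace ℝ (Fin d),
      ∫ x, ‖φ (x + h) - φ x‖ ≤ C * ‖h‖ ^ α) :
    ∫⁻ a in Set.Ioi (0 : ℝ),
        (∫⁻ b : EuclideanSpace ℝ (Fin d),
          ENNReal.ofReal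
            ‖∫ x : EuclideanSpace ℝ (Fin d),
                φ x * conj (((a ^ (-(d : ℝ) / 2) : ℝ) : ℂ) * φ (a⁻¹ • x - b))‖)
        * ENNReal.ofReal (a ^ ((d : ℝ) / 2 + ε - 1))
      < ⊤ := by
  classical
  -- measurable representative
  set ψ : EuclideanSpace ℝ (Fin d) → ℂ := hφ1.1.mk φ with hψdef
  have hψm : StronglyMeasurable ψ := hφ1.1.stronglyMeasurable_mk
  have hψe : φ =ᵐ[volume] ψ := hφ1.1.ae_eq_mk
  have hψ1 : Integrable ψ volume := hφ1.congr hψe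
  have hψmean : ∫ x, ψ x = 0 := by
    rw [← integral_congr_ae hψe]; exact hmean
  have hψmoment : Integrable (fun x : EuclideanSpace ℝ (Fin d) => ‖ψ x‖ * ‖x‖ ^ α) volume :=
    hmoment.congr (hψe.mono fun x hx => by simp only [hx])
  -- quasi measure preserving affine maps
  have hqmp : ∀ (a : ℝ), a ≠ 0 → ∀ b : EuclideanSpace ℝ (Fin d),
      Measure.QuasiMeasurePreserving
        (fun x : EuclideanSpace ℝ (Fin d) => a⁻¹ • x - b) volume volume := by
    intro a ha b
    exact ((measurePreserving_sub_right volume b).quasiMeasurePreserving).comp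
      (Measure.quasiMeasurePreserving_smul volume (inv_ne_zero ha))
  -- Hölder for ψ
  have hψholder : ∀ h : EuclideanSpace ℝ (Fin d),
      ∫ x, ‖ψ (x + h) - ψ x‖ ≤ C * ‖h‖ ^ α := by
    intro h
    have h1 : (fun x : EuclideanSpace ℝ (Fin d) => φ (x + h)) =ᵐ[volume]
        fun x => ψ (x + h) :=
      (measurePreserving_add_right volume h).quasiMeasurePreserving.ae_eq_comp hψe
    have h2 : (fun x : EuclideanSpace ℝ (Fin d) => ‖φ (x + h) - φ x‖) =ᵐ[volume]
        fun x => ‖ψ (x + h) - ψ x‖ := by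
      filter_upwards [hψe, h1] with x hx h1x
      rw [hx, h1x]
    rw [← integral_congr_ae h2]
    exact hholder h
  -- basic finite quantities
  set I1 : ℝ≥0∞ := ∫⁻ x : EuclideanSpace ℝ (Fin d), (‖ψ x‖₊ : ℝ≥0∞) with hI1
  have hI1top : I1 < ⊤ := hψ1.2
  set M : ℝ≥0∞ := ∫⁻ x : EuclideanSpace ℝ (Fin d), ENNReal.ofReal (‖ψ x‖ * ‖x‖ ^ α) with hM
  have hMtop : M < ⊤ := by
    refine lt_of_le_of_lt (lintegral_mono fun x => Real.ofReal_le_enorm _) hψmoment.2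
  -- Bound A : valid for all a > 0
  have boundA : ∀ a : ℝ, 0 < a →
      (∫⁻ b : EuclideanSpace ℝ (Fin d), ENNReal.ofReal
        ‖∫ x : EuclideanSpace ℝ (Fin d),
            ψ x * conj (((a ^ (-(d : ℝ) / 2) : ℝ) : ℂ) * ψ (a⁻¹ • x - b))‖)
      ≤ ENNReal.ofReal (a ^ (-(d : ℝ) / 2)) * (I1 * I1) := by
    intro a ha
    set c : ℝ := a ^ (-(d : ℝ) / 2) with hc
    have hc0 : 0 ≤ c := (Real.rpow_pos_of_pos ha _).le
    have hcoe : ∀ z : ℂ, (‖conj ((c : ℂ) * z)‖₊ : ℝ≥0∞)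
        = ENNReal.ofReal c * (‖z‖₊ : ℝ≥0∞) := by
      intro z
      rw [RCLike.nnnorm_conj, nnnorm_mul, ENNReal.coe_mul]
      congr 1
      rw [← enorm_eq_nnnorm, ← ofReal_norm, Complex.norm_real, Real.norm_eq_abs, abs_of_nonneg hc0]
    have step1 : ∀ b : EuclideanSpace ℝ (Fin d),
        ENNReal.ofReal ‖∫ x : EuclideanSpace ℝ (Fin d),
            ψ x * conj ((c : ℂ) * ψ (a⁻¹ • x - b))‖
        ≤ ∫⁻ x : EuclideanSpace ℝ (Fin d),
            ((‖ψ x‖₊ : ℝ≥0∞) * ENNReal.ofReal c) * (‖ψ (a⁻¹ • x - b)‖₊ : ℝ≥0∞) := by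
      intro b
      rw [ofReal_norm]
      refine le_trans (enorm_integral_le_lintegral_enorm _) (le_of_eq ?_)
      refine lintegral_congr fun x => ?_
      rw [enorm_eq_nnnorm, nnnorm_mul, ENNReal.coe_mul, hcoe]
      ring
    have hmeas : AEMeasurable (Function.uncurry fun (b x : EuclideanSpace ℝ (Fin d)) =>
        ((‖ψ x‖₊ : ℝ≥0∞) * ENNReal.ofReal c) * (‖ψ (a⁻¹ • x - b)‖₊ : ℝ≥0∞))
        ((volume : Measure (EuclideanSpace ℝ (Fin d))).prod volume) := by
      refine Measurable.aemeasurable ?_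
      change Measurable fun p : EuclideanSpace ℝ (Fin d) × EuclideanSpace ℝ (Fin d) =>
        ((‖ψ p.2‖₊ : ℝ≥0∞) * ENNReal.ofReal c) * (‖ψ (a⁻¹ • p.2 - p.1)‖₊ : ℝ≥0∞)
      exact (((hψm.measurable.comp measurable_snd).enorm).mul
        (measurable_const : Measurable fun _ : EuclideanSpace ℝ (Fin d) × EuclideanSpace ℝ (Fin d) => ENNReal.ofReal c)).mul
        (hψm.measurable.comp ((measurable_snd.const_smul a⁻¹).sub measurable_fst)).enorm
    calc (∫⁻ b, ENNReal.ofReal ‖∫ x : EuclideanSpace ℝ (Fin d),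
            ψ x * conj ((c : ℂ) * ψ (a⁻¹ • x - b))‖)
        ≤ ∫⁻ b, ∫⁻ x, ((‖ψ x‖₊ : ℝ≥0∞) * ENNReal.ofReal c)
            * (‖ψ (a⁻¹ • x - b)‖₊ : ℝ≥0∞) := lintegral_mono step1
      _ = ∫⁻ x, ∫⁻ b, ((‖ψ x‖₊ : ℝ≥0∞) * ENNReal.ofReal c)
            * (‖ψ (a⁻¹ • x - b)‖₊ : ℝ≥0∞) := lintegral_lintegral_swap hmeas
      _ = ∫⁻ x, ((‖ψ x‖₊ : ℝ≥0∞) * ENNReal.ofReal c)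
            * ∫⁻ b, (‖ψ (a⁻¹ • x - b)‖₊ : ℝ≥0∞) := by
          refine lintegral_congr fun x => ?_
          exact lintegral_const_mul' _ _
            (ENNReal.mul_ne_top ENNReal.coe_ne_top ENNReal.ofReal_ne_top)
      _ = ∫⁻ x, ((‖ψ x‖₊ : ℝ≥0∞) * ENNReal.ofReal c) * I1 := by
          refine lintegral_congr fun x => ?_
          rw [wka_lintegral_comp_const_sub (fun y => (‖ψ y‖₊ : ℝ≥0∞)) (a⁻¹ • x)]
      _ = ∫⁻ x, (‖ψ x‖₊ : ℝ≥0∞) * (ENNReal.ofReal c * I1) := by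
          refine lintegral_congr fun x => ?_; ring
      _ = I1 * (ENNReal.ofReal c * I1) :=
          lintegral_mul_const' _ _
            (ENNReal.mul_ne_top ENNReal.ofReal_ne_top hI1top.ne)
      _ = ENNReal.ofReal c * (I1 * I1) := by ring
  -- Bound B : uses mean zero and Hölder
  have boundB : ∀ a : ℝ, 0 < a →
      (∫⁻ b : EuclideanSpace ℝ (Fin d), ENNReal.ofReal
        ‖∫ x : EuclideanSpace ℝ (Fin d),
            ψ x * conj (((a ^ (-(d : ℝ) / 2) : ℝ) : ℂ) * ψ (a⁻¹ • x - b))‖)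
      ≤ ENNReal.ofReal (a ^ (-(d : ℝ) / 2))
          * (ENNReal.ofReal (a ^ (-α)) * (ENNReal.ofReal |C| * M)) := by
    intro a ha
    set c : ℝ := a ^ (-(d : ℝ) / 2) with hc
    have hc0 : 0 ≤ c := (Real.rpow_pos_of_pos ha _).le
    -- pointwise bound in b
    have step1 : ∀ b : EuclideanSpace ℝ (Fin d),
        ENNReal.ofReal ‖∫ x : EuclideanSpace ℝ (Fin d),
            ψ x * conj ((c : ℂ) * ψ (a⁻¹ • x - b))‖
        ≤ ENNReal.ofReal c * ∫⁻ x : EuclideanSpace ℝ (Fin d),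
            (‖ψ x‖₊ : ℝ≥0∞) * (‖ψ (a⁻¹ • x - b) - ψ (-b)‖₊ : ℝ≥0∞) := by
      intro b
      have hint_eq : (∫ x : EuclideanSpace ℝ (Fin d),
          ψ x * conj ((c : ℂ) * ψ (a⁻¹ • x - b)))
          = (c : ℂ) • ∫ x : EuclideanSpace ℝ (Fin d), ψ x * conj (ψ (a⁻¹ • x - b)) := by
        rw [← integral_smul]
        refine integral_congr_ae (Filter.Eventually.of_forall fun x => ?_)
        simp only [map_mul, Complex.conj_ofReal, smul_eq_mul]
        ring
      by_cases hgint : Integrable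
          (fun x : EuclideanSpace ℝ (Fin d) => ψ x * conj (ψ (a⁻¹ • x - b))) volume
      · have h0 : (∫ x : EuclideanSpace ℝ (Fin d), ψ x * conj (ψ (-b))) = 0 := by
          rw [integral_mul_const, hψmean, zero_mul]
        have h1 : (∫ x : EuclideanSpace ℝ (Fin d), ψ x * conj (ψ (a⁻¹ • x - b)))
            = ∫ x : EuclideanSpace ℝ (Fin d),
                ψ x * (conj (ψ (a⁻¹ • x - b)) - conj (ψ (-b))) := by
          have hconst : Integrable
              (fun x : EuclideanSpace ℝ (Fin d) => ψ x * conj (ψ (-b))) volume :=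
            hψ1.mul_const _
          rw [eq_comm]
          calc (∫ x : EuclideanSpace ℝ (Fin d),
                ψ x * (conj (ψ (a⁻¹ • x - b)) - conj (ψ (-b))))
              = ∫ x : EuclideanSpace ℝ (Fin d),
                  (ψ x * conj (ψ (a⁻¹ • x - b)) - ψ x * conj (ψ (-b))) := by
                refine integral_congr_ae (Filter.Eventually.of_forall fun x => ?_)
                ring
            _ = (∫ x : EuclideanSpace ℝ (Fin d), ψ x * conj (ψ (a⁻¹ • x - b)))
                  - ∫ x : EuclideanSpace ℝ (Fin d), ψ x * conj (ψ (-b)) :=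
                integral_sub hgint hconst
            _ = ∫ x : EuclideanSpace ℝ (Fin d), ψ x * conj (ψ (a⁻¹ • x - b)) := by
                rw [h0, sub_zero]
        rw [hint_eq, h1]
        calc ENNReal.ofReal ‖(c : ℂ) • ∫ x : EuclideanSpace ℝ (Fin d),
              ψ x * (conj (ψ (a⁻¹ • x - b)) - conj (ψ (-b)))‖
            = ENNReal.ofReal c * ENNReal.ofReal ‖∫ x : EuclideanSpace ℝ (Fin d),
              ψ x * (conj (ψ (a⁻¹ • x - b)) - conj (ψ (-b)))‖ := by
              rw [norm_smul, Complex.norm_real, Real.norm_eq_abs, abs_of_nonneg hc0,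
                ENNReal.ofReal_mul hc0]
          _ ≤ ENNReal.ofReal c * ∫⁻ x : EuclideanSpace ℝ (Fin d),
              (‖ψ x * (conj (ψ (a⁻¹ • x - b)) - conj (ψ (-b)))‖₊ : ℝ≥0∞) := by
              refine mul_le_mul_right ?_ _
              rw [ofReal_norm]
              exact enorm_integral_le_lintegral_enorm _
          _ = ENNReal.ofReal c * ∫⁻ x : EuclideanSpace ℝ (Fin d),
              (‖ψ x‖₊ : ℝ≥0∞) * (‖ψ (a⁻¹ • x - b) - ψ (-b)‖₊ : ℝ≥0∞) := by
              congr 1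
              refine lintegral_congr fun x => ?_
              rw [nnnorm_mul, ENNReal.coe_mul, ← map_sub, RCLike.nnnorm_conj]
      · have : ¬ Integrable (fun x : EuclideanSpace ℝ (Fin d) =>
            ψ x * conj ((c : ℂ) * ψ (a⁻¹ • x - b))) volume := by
          intro hI
          apply hgint
          have hceq : (fun x : EuclideanSpace ℝ (Fin d) =>
              ψ x * conj ((c : ℂ) * ψ (a⁻¹ • x - b)))
              = fun x => (c : ℂ) • (ψ x * conj (ψ (a⁻¹ • x - b))) := by
            funext x
            simp only [map_mul, Complex.conj_ofReal, smul_eq_mul]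
            ring
          rw [hceq] at hI
          have hcne : (c : ℂ) ≠ 0 := by
            simp only [ne_eq, Complex.ofReal_eq_zero]
            exact (Real.rpow_pos_of_pos ha _).ne'
          exact (integrable_smul_iff hcne _).mp hI
        rw [integral_undef this]
        simp
    -- integrate in b and swap
    have hmeas : AEMeasurable (Function.uncurry fun (b x : EuclideanSpace ℝ (Fin d)) =>
        (‖ψ x‖₊ : ℝ≥0∞) * (‖ψ (a⁻¹ • x - b) - ψ (-b)‖₊ : ℝ≥0∞))
        ((volume : Measure (EuclideanSpace ℝ (Fin d))).prod volume) := by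
      refine Measurable.aemeasurable ?_
      change Measurable fun p : EuclideanSpace ℝ (Fin d) × EuclideanSpace ℝ (Fin d) =>
        (‖ψ p.2‖₊ : ℝ≥0∞) * (‖ψ (a⁻¹ • p.2 - p.1) - ψ (-p.1)‖₊ : ℝ≥0∞)
      exact ((hψm.measurable.comp measurable_snd).enorm).mul
        (((hψm.measurable.comp ((measurable_snd.const_smul a⁻¹).sub measurable_fst)).sub
          (hψm.measurable.comp measurable_fst.neg)).enorm)
    -- the key translation estimate
    have key : ∀ v : EuclideanSpace ℝ (Fin d),
        (∫⁻ b : EuclideanSpace ℝ (Fin d), (‖ψ (v - b) - ψ (-b)‖₊ : ℝ≥0∞))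
        ≤ ENNReal.ofReal (C * ‖v‖ ^ α) := by
      intro v
      have h := wka_lintegral_comp_neg
        (fun b : EuclideanSpace ℝ (Fin d) => (‖ψ (v - b) - ψ (-b)‖₊ : ℝ≥0∞))
      simp only [sub_neg_eq_add, neg_neg] at h
      have h2 : (∫⁻ b : EuclideanSpace ℝ (Fin d), (‖ψ (v - b) - ψ (-b)‖₊ : ℝ≥0∞))
          = ∫⁻ u : EuclideanSpace ℝ (Fin d), (‖ψ (u + v) - ψ u‖₊ : ℝ≥0∞) := by
        rw [← h]
        refine lintegral_congr fun u => ?_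
        rw [add_comm]
      have hint : Integrable (fun u : EuclideanSpace ℝ (Fin d) => ψ (u + v) - ψ u) volume :=
        (hψ1.comp_add_right v).sub hψ1
      rw [h2]
      refine le_trans (le_of_eq (ofReal_integral_norm_eq_lintegral_enorm hint).symm) ?_
      exact ENNReal.ofReal_le_ofReal (hψholder v)
    -- pointwise in x estimate
    have hx_est : ∀ x : EuclideanSpace ℝ (Fin d),
        (‖ψ x‖₊ : ℝ≥0∞) * ENNReal.ofReal (C * ‖a⁻¹ • x‖ ^ α)
        ≤ ENNReal.ofReal (a ^ (-α)) * (ENNReal.ofReal |C|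
            * ENNReal.ofReal (‖ψ x‖ * ‖x‖ ^ α)) := by
      intro x
      have hnorm : ‖a⁻¹ • x‖ ^ α = a ^ (-α) * ‖x‖ ^ α := by
        rw [norm_smul, Real.norm_eq_abs, abs_of_nonneg (inv_nonneg.2 ha.le),
          Real.mul_rpow (inv_nonneg.2 ha.le) (norm_nonneg _),
          Real.inv_rpow ha.le, ← Real.rpow_neg ha.le]
      calc (‖ψ x‖₊ : ℝ≥0∞) * ENNReal.ofReal (C * ‖a⁻¹ • x‖ ^ α)
          = ENNReal.ofReal (‖ψ x‖ * (C * ‖a⁻¹ • x‖ ^ α)) := by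
            rw [ENNReal.ofReal_mul (norm_nonneg _), ofReal_norm, enorm_eq_nnnorm]
        _ ≤ ENNReal.ofReal (a ^ (-α) * (|C| * (‖ψ x‖ * ‖x‖ ^ α))) := by
            refine ENNReal.ofReal_le_ofReal ?_
            rw [hnorm]
            calc ‖ψ x‖ * (C * (a ^ (-α) * ‖x‖ ^ α))
                ≤ ‖ψ x‖ * (|C| * (a ^ (-α) * ‖x‖ ^ α)) := by
                  refine mul_le_mul_of_nonneg_left
                    (mul_le_mul_of_nonneg_right (le_abs_self C) ?_) (norm_nonneg _)
                  positivity
              _ = a ^ (-α) * (|C| * (‖ψ x‖ * ‖x‖ ^ α)) := by ring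
        _ = ENNReal.ofReal (a ^ (-α)) * (ENNReal.ofReal |C|
              * ENNReal.ofReal (‖ψ x‖ * ‖x‖ ^ α)) := by
            rw [ENNReal.ofReal_mul (Real.rpow_nonneg ha.le _),
              ENNReal.ofReal_mul (abs_nonneg C)]
    -- main chain for bound B
    calc (∫⁻ b : EuclideanSpace ℝ (Fin d), ENNReal.ofReal
            ‖∫ x : EuclideanSpace ℝ (Fin d), ψ x * conj ((c : ℂ) * ψ (a⁻¹ • x - b))‖)
        ≤ ∫⁻ b, ENNReal.ofReal c * ∫⁻ x : EuclideanSpace ℝ (Fin d),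
            (‖ψ x‖₊ : ℝ≥0∞) * (‖ψ (a⁻¹ • x - b) - ψ (-b)‖₊ : ℝ≥0∞) := lintegral_mono step1
      _ = ENNReal.ofReal c * ∫⁻ b, ∫⁻ x : EuclideanSpace ℝ (Fin d),
            (‖ψ x‖₊ : ℝ≥0∞) * (‖ψ (a⁻¹ • x - b) - ψ (-b)‖₊ : ℝ≥0∞) :=
          lintegral_const_mul' _ _ ENNReal.ofReal_ne_top
      _ = ENNReal.ofReal c * ∫⁻ x, ∫⁻ b,
            (‖ψ x‖₊ : ℝ≥0∞) * (‖ψ (a⁻¹ • x - b) - ψ (-b)‖₊ : ℝ≥0∞) := by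
          rw [lintegral_lintegral_swap hmeas]
      _ = ENNReal.ofReal c * ∫⁻ x, (‖ψ x‖₊ : ℝ≥0∞)
            * ∫⁻ b, (‖ψ (a⁻¹ • x - b) - ψ (-b)‖₊ : ℝ≥0∞) := by
          congr 1
          exact lintegral_congr fun x => lintegral_const_mul' _ _ ENNReal.coe_ne_top
      _ ≤ ENNReal.ofReal c * ∫⁻ x, (‖ψ x‖₊ : ℝ≥0∞)
            * ENNReal.ofReal (C * ‖a⁻¹ • x‖ ^ α) :=
          mul_le_mul_right (lintegral_mono fun x => mul_le_mul_right (key (a⁻¹ • x)) _) _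
      _ ≤ ENNReal.ofReal c * ∫⁻ x, ENNReal.ofReal (a ^ (-α))
            * (ENNReal.ofReal |C| * ENNReal.ofReal (‖ψ x‖ * ‖x‖ ^ α)) :=
          mul_le_mul_right (lintegral_mono hx_est) _
      _ = ENNReal.ofReal c * (ENNReal.ofReal (a ^ (-α)) * (ENNReal.ofReal |C| * M)) := by
          rw [lintegral_const_mul' _ _ ENNReal.ofReal_ne_top]
          congr 1
          rw [lintegral_const_mul' _ _ ENNReal.ofReal_ne_top]
  -- reduce goal to ψ
  have hgoal_eq : ∀ᵐ a ∂(volume : Measure ℝ), a ∈ Set.Ioi (0:ℝ) →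
      ((∫⁻ b : EuclideanSpace ℝ (Fin d), ENNReal.ofReal
          ‖∫ x : EuclideanSpace ℝ (Fin d),
              φ x * conj (((a ^ (-(d : ℝ) / 2) : ℝ) : ℂ) * φ (a⁻¹ • x - b))‖)
        * ENNReal.ofReal (a ^ ((d : ℝ) / 2 + ε - 1)))
      = (∫⁻ b : EuclideanSpace ℝ (Fin d), ENNReal.ofReal
          ‖∫ x : EuclideanSpace ℝ (Fin d),
              ψ x * conj (((a ^ (-(d : ℝ) / 2) : ℝ) : ℂ) * ψ (a⁻¹ • x - b))‖)
        * ENNReal.ofReal (a ^ ((d : ℝ) / 2 + ε - 1)) := by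
    refine Filter.Eventually.of_forall fun a ha => ?_
    have ha0 : 0 < a := Set.mem_Ioi.mp ha
    congr 1
    refine lintegral_congr fun b => ?_
    have h1 : (fun x : EuclideanSpace ℝ (Fin d) => φ (a⁻¹ • x - b)) =ᵐ[volume]
        fun x => ψ (a⁻¹ • x - b) := (hqmp a ha0.ne' b).ae_eq_comp hψe
    refine congrArg ENNReal.ofReal (congrArg norm (integral_congr_ae ?_))
    filter_upwards [hψe, h1] with x hx h1x
    rw [hx, h1x]
  rw [setLIntegral_congr_fun_ae measurableSet_Ioi hgoal_eq]
  -- split the integral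
  rw [← Set.Ioc_union_Ioi_eq_Ioi (zero_le_one' ℝ),
    lintegral_union measurableSet_Ioi (Set.Ioc_disjoint_Ioi le_rfl)]
  have hK1 : (I1 * I1) ≠ ⊤ := ENNReal.mul_ne_top hI1top.ne hI1top.ne
  have hK2 : (ENNReal.ofReal |C| * M) ≠ ⊤ :=
    ENNReal.mul_ne_top ENNReal.ofReal_ne_top hMtop.ne
  refine ENNReal.add_lt_top.2 ⟨?_, ?_⟩
  · -- small scales
    have hfin : ∫⁻ a in Set.Ioc (0:ℝ) 1, ENNReal.ofReal (a ^ (ε - 1)) < ⊤ := by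
      have hi : IntegrableOn (fun a : ℝ => a ^ (ε - 1)) (Set.Ioc 0 1) volume :=
        (intervalIntegral.intervalIntegrable_rpow' (by linarith)).1
      exact lt_of_le_of_lt (lintegral_mono fun a => Real.ofReal_le_enorm _) hi.2
    refine lt_of_le_of_lt (setLIntegral_mono
      (g := fun a => (I1 * I1) * ENNReal.ofReal (a ^ (ε - 1))) ?_ ?_) ?_
    · exact measurable_const.mul (ENNReal.measurable_ofReal.comp
        (measurable_id'.pow_const _))
    · intro a ha
      have ha0 : 0 < a := ha.1
      calc (∫⁻ b : EuclideanSpace ℝ (Fin d), ENNReal.ofReal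
            ‖∫ x : EuclideanSpace ℝ (Fin d),
                ψ x * conj (((a ^ (-(d : ℝ) / 2) : ℝ) : ℂ) * ψ (a⁻¹ • x - b))‖)
            * ENNReal.ofReal (a ^ ((d : ℝ) / 2 + ε - 1))
          ≤ (ENNReal.ofReal (a ^ (-(d : ℝ) / 2)) * (I1 * I1))
              * ENNReal.ofReal (a ^ ((d : ℝ) / 2 + ε - 1)) :=
            mul_le_mul_left (boundA a ha0) _
        _ = (I1 * I1) * (ENNReal.ofReal (a ^ (-(d : ℝ) / 2))
              * ENNReal.ofReal (a ^ ((d : ℝ) / 2 + ε - 1))) := by ring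
        _ = (I1 * I1) * ENNReal.ofReal (a ^ (ε - 1)) := by
            rw [← ENNReal.ofReal_mul (Real.rpow_nonneg ha0.le _), ← Real.rpow_add ha0]
            congr 2
            ring
    · rw [lintegral_const_mul' _ _ hK1]
      exact ENNReal.mul_lt_top hK1.lt_top hfin
  · -- large scales
    have hfin : ∫⁻ a in Set.Ioi (1:ℝ), ENNReal.ofReal (a ^ (ε - α - 1)) < ⊤ := by
      have hi : IntegrableOn (fun a : ℝ => a ^ (ε - α - 1)) (Set.Ioi 1) volume :=
        (integrableOn_Ioi_rpow_iff zero_lt_one).2 (by linarith)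
      exact lt_of_le_of_lt (lintegral_mono fun a => Real.ofReal_le_enorm _) hi.2
    refine lt_of_le_of_lt (setLIntegral_mono
      (g := fun a => (ENNReal.ofReal |C| * M) * ENNReal.ofReal (a ^ (ε - α - 1))) ?_ ?_) ?_
    · exact measurable_const.mul (ENNReal.measurable_ofReal.comp
        (measurable_id'.pow_const _))
    · intro a ha
      have ha0 : 0 < a := lt_trans zero_lt_one ha
      calc (∫⁻ b : EuclideanSpace ℝ (Fin d), ENNReal.ofReal
            ‖∫ x : EuclideanSpace ℝ (Fin d),
                ψ x * conj (((a ^ (-(d : ℝ) / 2) : ℝ) : ℂ) * ψ (a⁻¹ • x - b))‖)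
            * ENNReal.ofReal (a ^ ((d : ℝ) / 2 + ε - 1))
          ≤ (ENNReal.ofReal (a ^ (-(d : ℝ) / 2))
              * (ENNReal.ofReal (a ^ (-α)) * (ENNReal.ofReal |C| * M)))
              * ENNReal.ofReal (a ^ ((d : ℝ) / 2 + ε - 1)) :=
            mul_le_mul_left (boundB a ha0) _
        _ = (ENNReal.ofReal |C| * M) * (ENNReal.ofReal (a ^ (-(d : ℝ) / 2))
              * ENNReal.ofReal (a ^ (-α))
              * ENNReal.ofReal (a ^ ((d : ℝ) / 2 + ε - 1))) := by ring
        _ = (ENNReal.ofReal |C| * M) * ENNReal.ofReal (a ^ (ε - α - 1)) := by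
            rw [← ENNReal.ofReal_mul (Real.rpow_nonneg ha0.le _), ← Real.rpow_add ha0,
              ← ENNReal.ofReal_mul (Real.rpow_nonneg ha0.le _), ← Real.rpow_add ha0]
            congr 2
            ring
    · rw [lintegral_const_mul' _ _ hK2]
      exact ENNReal.mul_lt_top hK2.lt_top hfin
end

section
/- Let T be a compact positive self-adjoint operator on a Hilbert space H with ‖T‖ ≤ 1, and suppose {S_h}_{h∈Γ} is a group of unitaries on H indexed by a group Γ such that for every h ∈ Γ there is a compact positive operator T_h with T_h ≥ S_h T S_h^* and a compact positive operator T' ≥ T_h for all h in a fixed infinite sequence. If f ≠ 0 satisfies Tf = f and the vectors f_k = S_{h_k}⋯S_{h_1} f are linearly independent, and T' ≥ S_{h_k}⋯S_{h_1} T (S_{h_k}⋯S_{h_1})^* for all k with ‖T'‖ ≤ 1 and T' compact, then a contradiction arises: each f_k is an eigenvector of T' with eigenvalue 1, giving an infinite-dimensional eigenspace for a compact operator. Conclude: no such nonzero fixed vector f exists, i.e., ‖T‖ attained at 1 is impossible and hence ⟨(I − T)f, f⟩ ≥ c‖f‖² for some c > 0 and all f. -/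
open MeasureTheory ContinuousLinearMap

local notation "⟪" x ", " y "⟫" => @inner ℂ _ _ x y

private lemma posCS {H : Type*} [NormedAddCommGroup H] [InnerProductSpace ℂ H] [CompleteSpace H]
    (A : H →L[ℂ] H) (hsa : IsSelfAdjoint A) (h0 : ∀ f : H, 0 ≤ (⟪A f, f⟫).re) (f : H) :
    ‖A f‖ ^ 2 ≤ ‖A‖ * (⟪A f, f⟫).re := by
  by_cases hf : A f = 0
  · simp [hf]
  · have hAdj : ∀ x y : H, ⟪A x, y⟫ = ⟪x, A y⟫ := fun x y => by
      conv_lhs => rw [← hsa.adjoint_eq]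
      exact ContinuousLinearMap.adjoint_inner_left A y x
    have key : ∀ t : ℝ, 0 ≤ (⟪A (A f), A f⟫).re * (t * t) + (2 * ‖A f‖ ^ 2) * t
        + (⟪A f, f⟫).re := by
      intro t
      have h := h0 (f + (t : ℂ) • A f)
      have expand : ⟪A (f + (t : ℂ) • A f), f + (t : ℂ) • A f⟫
          = ⟪A f, f⟫ + (t : ℂ) * (⟪A f, A f⟫ + ⟪A f, A f⟫)
            + (t : ℂ) * (t : ℂ) * ⟪A (A f), A f⟫ := by
        rw [map_add, _root_.map_smul]
        rw [inner_add_left, inner_add_right, inner_add_right, inner_smul_left,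
          inner_smul_right, inner_smul_left, inner_smul_right, hAdj (A f) f]
        push_cast [Complex.conj_ofReal]
        ring
      rw [expand] at h
      simp only [Complex.add_re, Complex.mul_re, Complex.ofReal_re, Complex.ofReal_im,
        Complex.mul_im, zero_mul, mul_zero, sub_zero, zero_add, add_zero,
        zero_sub, neg_zero] at h
      have hS : (⟪A f, A f⟫).re = ‖A f‖ ^ 2 := inner_self_eq_norm_sq (𝕜 := ℂ) (A f)
      rw [hS] at h
      nlinarith [h]
    have hd := discrim_le_zero key
    rw [discrim] at hd
    have ha : (⟪A (A f), A f⟫).re ≤ ‖A‖ * ‖A f‖ ^ 2 := by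
      calc (⟪A (A f), A f⟫).re ≤ ‖⟪A (A f), A f⟫‖ := Complex.re_le_norm _
        _ ≤ ‖A (A f)‖ * ‖A f‖ := norm_inner_le_norm _ _
        _ ≤ (‖A‖ * ‖A f‖) * ‖A f‖ := by gcongr; exact A.le_opNorm _
        _ = ‖A‖ * ‖A f‖ ^ 2 := by ring
    have hAf : 0 < ‖A f‖ := norm_pos_iff.mpr hf
    nlinarith [h0 f, mul_le_mul_of_nonneg_right ha (h0 f), mul_pos hAf hAf]

/-- let `T` be a compact positive self-adjoint operator with `0 ≤ T ≤ I`,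
`U n` a sequence of unitaries (the iterated shifts `S_{h_n}⋯S_{h_1}`), and `T'` a
compact operator with `0 ≤ T' ≤ I` dominating all conjugates `U_n T U_n^*`.  If for
every nonzero fixed vector `f` of `T` the orbit `(U n f)` is linearly independent,
then `T` has no nonzero fixed vector, and consequently `I − T` is bounded below:
`⟨(I − T)f, f⟩ ≥ c‖f‖²` for some `c > 0` and all `f`. -/
theorem no_fixed_vector_and_gap
    {H : Type*} [NormedAddCommGroup H] [InnerProductSpace ℂ H] [CompleteSpace H]
    (T : H →L[ℂ] H) (hTc : IsCompactOperator T) (hTsa : IsSelfAdjoint T)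
    (hT0 : ∀ f : H, 0 ≤ (⟪T f, f⟫).re) (hT1 : ∀ f : H, (⟪T f, f⟫).re ≤ ‖f‖ ^ 2)
    (U : ℕ → (H →L[ℂ] H))
    (hUiso : ∀ n (f : H), ‖U n f‖ = ‖f‖)
    (hUsurj : ∀ n, Function.Surjective (U n))
    (T' : H →L[ℂ] H) (hT'c : IsCompactOperator T') (hT'sa : IsSelfAdjoint T')
    (hT'0 : ∀ f : H, 0 ≤ (⟪T' f, f⟫).re) (hT'1 : ∀ f : H, (⟪T' f, f⟫).re ≤ ‖f‖ ^ 2)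
    (hdom : ∀ n (f : H),
      (⟪T (ContinuousLinearMap.adjoint (U n) f), ContinuousLinearMap.adjoint (U n) f⟫).re
        ≤ (⟪T' f, f⟫).re)
    (hindep : ∀ f : H, f ≠ 0 → T f = f → LinearIndependent ℂ fun n : ℕ => U n f) :
    (∀ f : H, T f = f → f = 0) ∧
    ∃ c > (0 : ℝ), ∀ f : H, c * ‖f‖ ^ 2 ≤ (⟪f, f⟫ - ⟪T f, f⟫).re := by
  -- `U n` preserves inner products, hence `adjoint (U n) ∘ U n = id`
  have hUinner : ∀ n (x y : H), ⟪U n x, U n y⟫ = ⟪x, y⟫ := fun n =>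
    (LinearMap.norm_map_iff_inner_map_map (U n)).mp (hUiso n)
  have hUadj : ∀ n (x : H), ContinuousLinearMap.adjoint (U n) (U n x) = x := by
    intro n x
    refine ext_inner_right ℂ fun y => ?_
    rw [ContinuousLinearMap.adjoint_inner_left, hUinner n x y]
  -- positivity and self-adjointness of `1 - T'` and `1 - T`
  have hA'sa : IsSelfAdjoint (1 - T' : H →L[ℂ] H) := ((IsSelfAdjoint.one _).sub hT'sa : _)
  have hA'0 : ∀ x : H, 0 ≤ (⟪(1 - T' : H →L[ℂ] H) x, x⟫).re := by
    intro x
    have := hT'1 x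
    have hself : (⟪x, x⟫).re = ‖x‖ ^ 2 := inner_self_eq_norm_sq (𝕜 := ℂ) x
    simp only [ContinuousLinearMap.sub_apply, ContinuousLinearMap.one_apply, inner_sub_left,
      Complex.sub_re]
    linarith
  have hAsa : IsSelfAdjoint (1 - T : H →L[ℂ] H) := ((IsSelfAdjoint.one _).sub hTsa : _)
  have hA0 : ∀ x : H, 0 ≤ (⟪(1 - T : H →L[ℂ] H) x, x⟫).re := by
    intro x
    have := hT1 x
    have hself : (⟪x, x⟫).re = ‖x‖ ^ 2 := inner_self_eq_norm_sq (𝕜 := ℂ) x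
    simp only [ContinuousLinearMap.sub_apply, ContinuousLinearMap.one_apply, inner_sub_left,
      Complex.sub_re]
    linarith
  -- Part 1: no nonzero fixed vector
  have hnofix : ∀ f : H, T f = f → f = 0 := by
    intro f hTf
    by_contra hf
    -- each `U n f` is fixed by `T'`
    have hfix : ∀ n, T' (U n f) = U n f := by
      intro n
      have h1 := hdom n (U n f)
      rw [hUadj n f, hTf] at h1
      have hself : (⟪f, f⟫).re = ‖f‖ ^ 2 := inner_self_eq_norm_sq (𝕜 := ℂ) f
      have h2 := hT'1 (U n f)
      rw [hUiso n f] at h2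
      have hz : (⟪(1 - T' : H →L[ℂ] H) (U n f), U n f⟫).re = 0 := by
        have huf : (⟪U n f, U n f⟫).re = ‖f‖ ^ 2 := by
          have h5 : (⟪U n f, U n f⟫).re = ‖U n f‖ ^ 2 := inner_self_eq_norm_sq (𝕜 := ℂ) (U n f)
          rw [h5, hUiso n f]
        simp only [ContinuousLinearMap.sub_apply, ContinuousLinearMap.one_apply, inner_sub_left,
          Complex.sub_re, huf]
        linarith
      have hcs := posCS _ hA'sa hA'0 (U n f)
      rw [hz, mul_zero] at hcs
      have hz0 : (1 - T' : H →L[ℂ] H) (U n f) = 0 := by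
        have hn : ‖(1 - T' : H →L[ℂ] H) (U n f)‖ = 0 := by
          nlinarith [norm_nonneg ((1 - T' : H →L[ℂ] H) (U n f)), hcs]
        simpa using hn
      have h4 : U n f - T' (U n f) = 0 := by
        simpa [ContinuousLinearMap.sub_apply] using hz0
      exact (sub_eq_zero.mp h4).symm
    -- the eigenspace of `T'` at `1`
    set p : Submodule ℂ H := LinearMap.ker ((1 - T' : H →L[ℂ] H) : H →ₗ[ℂ] H) with hp
    have hmemp : ∀ n, U n f ∈ p := by
      intro n
      have : (1 - T' : H →L[ℂ] H) (U n f) = 0 := by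
        simp [ContinuousLinearMap.sub_apply, hfix n]
      exact this
    -- p is finite dimensional by compactness of T'
    obtain ⟨K, hKc, hKsub⟩ : ∃ K : Set H, IsCompact K ∧ ⇑T' '' Metric.closedBall 0 1 ⊆ K :=
      IsCompactOperator.image_closedBall_subset_compact (𝕜₁ := ℂ)
        (f := (T' : H →ₗ[ℂ] H)) hT'c 1
    have hcomp : IsCompact ((p : Set H) ∩ Metric.closedBall 0 1) := by
      refine hKc.of_isClosed_subset
        ((ContinuousLinearMap.isClosed_ker _).inter Metric.isClosed_closedBall) ?_
      rintro x ⟨hx, hxb⟩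
      have hx0 : (1 - T' : H →L[ℂ] H) x = 0 := hx
      have hxfix : T' x = x := by
        have h4 : x - T' x = 0 := by simpa [ContinuousLinearMap.sub_apply] using hx0
        exact (sub_eq_zero.mp h4).symm
      exact hKsub ⟨x, hxb, hxfix⟩
    have hball : IsCompact (Metric.closedBall (0 : p) 1) := by
      rw [Subtype.isCompact_iff]
      have himg : ((↑) '' Metric.closedBall (0 : p) 1 : Set H)
          = (p : Set H) ∩ Metric.closedBall 0 1 := by
        ext x
        constructor
        · rintro ⟨y, hy, rfl⟩
          refine ⟨y.2, ?_⟩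
          simpa [Metric.mem_closedBall, dist_zero_right] using hy
        · rintro ⟨hxp, hxb⟩
          refine ⟨⟨x, hxp⟩, ?_, rfl⟩
          simpa [Metric.mem_closedBall, dist_zero_right] using hxb
      rw [himg]
      exact hcomp
    haveI : FiniteDimensional ℂ p := .of_isCompact_closedBall₀ ℂ one_pos hball
    have hli := hindep f hf hTf
    have hli' : LinearIndependent ℂ (fun n : ℕ => (⟨U n f, hmemp n⟩ : p)) :=
      LinearIndependent.of_comp p.subtype hli
    exact Module.Finite.not_linearIndependent_of_infinite (fun n : ℕ => (⟨U n f, hmemp n⟩ : p)) hli'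
  refine ⟨hnofix, ?_⟩
  -- Part 2: spectral gap
  by_contra hcon
  push_neg at hcon
  have hseq : ∀ n : ℕ, ∃ g : H, ‖g‖ = 1 ∧
      (⟪(1 - T : H →L[ℂ] H) g, g⟫).re < 1 / (n + 1) := by
    intro n
    obtain ⟨f, hfn⟩ := hcon (1 / (n + 1)) (by positivity)
    have hf0 : f ≠ 0 := by
      rintro rfl
      simp at hfn
    have hfpos : (0 : ℝ) < ‖f‖ := norm_pos_iff.mpr hf0
    refine ⟨(‖f‖ : ℂ)⁻¹ • f, ?_, ?_⟩
    · rw [norm_smul]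
      simp [norm_inv, hfpos.ne']
    · have hexp : (⟪(1 - T : H →L[ℂ] H) ((‖f‖ : ℂ)⁻¹ • f), (‖f‖ : ℂ)⁻¹ • f⟫).re
          = (‖f‖ ^ 2)⁻¹ * (⟪f, f⟫ - ⟪T f, f⟫).re := by
        rw [_root_.map_smul, inner_smul_left, inner_smul_right]
        rw [← Complex.ofReal_inv, Complex.conj_ofReal]
        simp only [ContinuousLinearMap.sub_apply, ContinuousLinearMap.one_apply, inner_sub_left]
        rw [show ((‖f‖⁻¹ : ℝ) : ℂ) * (((‖f‖⁻¹ : ℝ) : ℂ) * (⟪f, f⟫ - ⟪T f, f⟫))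
            = (((‖f‖⁻¹ * ‖f‖⁻¹ : ℝ)) : ℂ) * (⟪f, f⟫ - ⟪T f, f⟫) by push_cast; ring]
        rw [Complex.re_ofReal_mul]
        congr 1
        rw [pow_two, mul_inv]
      rw [hexp]
      have h2 : (⟪f, f⟫ - ⟪T f, f⟫).re < 1 / (n + 1) * ‖f‖ ^ 2 := hfn
      have h3 : (0 : ℝ) < ‖f‖ ^ 2 := by positivity
      calc (‖f‖ ^ 2)⁻¹ * (⟪f, f⟫ - ⟪T f, f⟫).re
          < (‖f‖ ^ 2)⁻¹ * (1 / (n + 1) * ‖f‖ ^ 2) := by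
            apply mul_lt_mul_of_pos_left h2 (by positivity)
        _ = 1 / (n + 1) := by field_simp
  choose g hg1 hg2 using hseq
  -- `(1-T) g n → 0`
  have hsqlim : Filter.Tendsto (fun n => ‖(1 - T : H →L[ℂ] H) (g n)‖ ^ 2)
      Filter.atTop (nhds 0) := by
    have hub : ∀ n : ℕ, ‖(1 - T : H →L[ℂ] H) (g n)‖ ^ 2
        ≤ ‖(1 - T : H →L[ℂ] H)‖ * (1 / (n + 1)) := by
      intro n
      refine (posCS _ hAsa hA0 (g n)).trans ?_
      exact mul_le_mul_of_nonneg_left (hg2 n).le (norm_nonneg _)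
    have hlim0 : Filter.Tendsto (fun n : ℕ => ‖(1 - T : H →L[ℂ] H)‖ * (1 / (n + 1)))
        Filter.atTop (nhds 0) := by
      have := tendsto_one_div_add_atTop_nhds_zero_nat.const_mul ‖(1 - T : H →L[ℂ] H)‖
      simpa using this
    exact squeeze_zero (fun n => sq_nonneg _) hub hlim0
  have hlim : Filter.Tendsto (fun n => (1 - T : H →L[ℂ] H) (g n)) Filter.atTop (nhds 0) := by
    rw [tendsto_zero_iff_norm_tendsto_zero]
    have := (Real.continuous_sqrt.tendsto' 0 0 (by simp)).comp hsqlim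
    refine this.congr fun n => ?_
    simp [Real.sqrt_sq (norm_nonneg _)]
  -- extract convergent subsequence of `T (g n)`
  obtain ⟨K, hKc, hKsub⟩ : ∃ K : Set H, IsCompact K ∧ ⇑T '' Metric.closedBall 0 1 ⊆ K :=
    IsCompactOperator.image_closedBall_subset_compact (𝕜₁ := ℂ)
      (f := (T : H →ₗ[ℂ] H)) hTc 1
  have hmem : ∀ n, T (g n) ∈ K := fun n =>
    hKsub ⟨g n, by simp [hg1 n], rfl⟩
  obtain ⟨y, -, φ, hφ, hty⟩ := hKc.tendsto_subseq hmem
  have hgy : Filter.Tendsto (fun k => g (φ k)) Filter.atTop (nhds y) := by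
    have heq : (fun k => g (φ k))
        = fun k => (1 - T : H →L[ℂ] H) (g (φ k)) + T (g (φ k)) := by
      funext k
      simp [ContinuousLinearMap.sub_apply]
    rw [heq]
    have := (hlim.comp hφ.tendsto_atTop).add hty
    simpa using this
  have hyn : ‖y‖ = 1 := by
    have h1 : Filter.Tendsto (fun k => ‖g (φ k)‖) Filter.atTop (nhds ‖y‖) :=
      (continuous_norm.tendsto y).comp hgy
    have h2 : Filter.Tendsto (fun _ : ℕ => (1 : ℝ)) Filter.atTop (nhds 1) := tendsto_const_nhds
    exact tendsto_nhds_unique (h1.congr fun k => (hg1 (φ k))) h2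
  have hTy : T y = y := by
    have h1 : Filter.Tendsto (fun k => T (g (φ k))) Filter.atTop (nhds (T y)) :=
      (T.continuous.tendsto y).comp hgy
    exact tendsto_nhds_unique h1 hty
  have : y = 0 := hnofix y hTy
  rw [this] at hyn
  simp at hyn
end
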